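/- For real κ ≠ 0, the function exp_κ(x) = (√(1+κ²x²) + κx)^{1/κ} is differentiable on ℝ and satisfies √(1+κ²x²)·(d/dx) exp_κ(x) = exp_κ(x) for all x. -/

import Mathlib

noncomputable def kexp (κ x : ℝ) : ℝ :=
  (Real.sqrt (1 + κ^2 * x^2) + κ*x) ^ (1/κ : ℝ)

lemma kexp_base_pos (κ x : ℝ) : 0 < Real.sqrt (1 + κ^2 * x^2) + κ*x := by
  have h1 : (κ*x)^2 < 1 + κ^2 * x^2 := by nlinarith [sq_nonneg (κ*x)]
  have h2 : |κ*x| < Real.sqrt (1 + κ^2 * x^2) := by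
    have := Real.sqrt_lt_sqrt (sq_nonneg (κ*x)) h1
    rwa [Real.sqrt_sq_eq_abs] at this
  have := neg_abs_le (κ*x)
  linarith

lemma kexp_hasDerivAt (κ : ℝ) (hκ : κ ≠ 0) (x : ℝ) :
    HasDerivAt (kexp κ)
      ((κ^2*(2*x) / (2 * Real.sqrt (1 + κ^2*x^2)) + κ) * (1/κ) *
        (Real.sqrt (1 + κ^2*x^2) + κ*x) ^ (1/κ - 1 : ℝ)) x := by
  have h1 : (0:ℝ) < 1 + κ^2 * x^2 := by positivity
  have hg : HasDerivAt (fun x : ℝ => 1 + κ^2 * x^2) (κ^2 * (2*x)) x := by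
    simpa using ((hasDerivAt_pow 2 x).const_mul (κ^2)).const_add 1
  have hsq := hg.sqrt (ne_of_gt h1)
  have hlin : HasDerivAt (fun x : ℝ => κ * x) κ x := by
    simpa using (hasDerivAt_id x).const_mul κ
  have hb := hsq.add hlin
  have hbpos := kexp_base_pos κ x
  exact hb.rpow_const (Or.inl (ne_of_gt hbpos))

theorem kexp_deriv (κ : ℝ) (hκ : κ ≠ 0) :
    Differentiable ℝ (kexp κ) ∧
    ∀ x : ℝ, Real.sqrt (1 + κ^2 * x^2) * deriv (kexp κ) x = kexp κ x := by
  refine ⟨fun x => (kexp_hasDerivAt κ hκ x).differentiableAt, fun x => ?_⟩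
  rw [(kexp_hasDerivAt κ hκ x).deriv]
  set s := Real.sqrt (1 + κ^2*x^2) with hs
  have h1 : (0:ℝ) < 1 + κ^2 * x^2 := by positivity
  have hspos : 0 < s := Real.sqrt_pos.mpr h1
  have hbpos := kexp_base_pos κ x
  have key : s * ((κ^2*(2*x) / (2 * s) + κ) * (1/κ)) = s + κ*x := by
    field_simp
    ring
  calc s * ((κ^2*(2*x) / (2 * s) + κ) * (1/κ) * (s + κ*x) ^ (1/κ - 1 : ℝ))
      = (s * ((κ^2*(2*x) / (2 * s) + κ) * (1/κ))) * (s + κ*x) ^ (1/κ - 1 : ℝ) := by ring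
    _ = (s + κ*x) ^ (1/κ - 1 : ℝ) * (s + κ*x) := by rw [key]; ring
    _ = (s + κ*x) ^ (1/κ - 1 + 1 : ℝ) := (Real.rpow_add_one (ne_of_gt hbpos) _).symm
    _ = kexp κ x := by norm_num [kexp, hs]
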